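/- If a family of open half-planes in R^2 covers R^2, then there exist at most three of them whose union is R^2; moreover, if exactly two suffice, those two are parallel (opposite) half-planes. -/

import Mathlib

open scoped RealInnerProductSpace

/-- The open half-plane `{x ∈ ℝ² | ⟪u, x⟫ > c}` determined by a normal vector
`u` and a threshold `c`. -/
noncomputable def openHalfPlane (u : EuclideanSpace ℝ (Fin 2)) (c : ℝ) :
    Set (EuclideanSpace ℝ (Fin 2)) := {x | c < ⟪u, x⟫}

lemma gram_solve1 (g11 g12 g22 a b : ℝ) (hdet : g11 * g22 - g12 ^ 2 ≠ 0) :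
    ((a * g22 - b * g12) / (g11 * g22 - g12 ^ 2)) * g11 +
      ((b * g11 - a * g12) / (g11 * g22 - g12 ^ 2)) * g12 = a := by
  rw [div_mul_eq_mul_div, div_mul_eq_mul_div, ← add_div, div_eq_iff hdet]
  ring

lemma gram_solve2 (g11 g12 g22 a b : ℝ) (hdet : g11 * g22 - g12 ^ 2 ≠ 0) :
    ((a * g22 - b * g12) / (g11 * g22 - g12 ^ 2)) * g12 +
      ((b * g11 - a * g12) / (g11 * g22 - g12 ^ 2)) * g22 = b := by
  rw [div_mul_eq_mul_div, div_mul_eq_mul_div, ← add_div, div_eq_iff hdet]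
  ring

/-- Two open half-planes covering the plane must have antiparallel normals. -/
lemma two_halfplanes (u v : EuclideanSpace ℝ (Fin 2)) (c d : ℝ) (hu : u ≠ 0) (hv : v ≠ 0)
    (h : openHalfPlane u c ∪ openHalfPlane v d = Set.univ) :
    ∃ t : ℝ, t < 0 ∧ v = t • u := by
  have hcov : ∀ x : EuclideanSpace ℝ (Fin 2), c < ⟪u, x⟫ ∨ d < ⟪v, x⟫ := by
    intro x
    have : x ∈ openHalfPlane u c ∪ openHalfPlane v d := by rw [h]; trivial
    simpa [openHalfPlane] using this
  have hg11 : (0:ℝ) < ⟪u, u⟫ := by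
    rw [real_inner_self_eq_norm_sq]
    exact pow_pos (norm_pos_iff.mpr hu) 2
  by_cases hdep : ∃ t : ℝ, v = t • u
  · obtain ⟨t, rfl⟩ := hdep
    have ht0 : t ≠ 0 := by rintro rfl; simp at hv
    rcases lt_or_gt_of_ne ht0 with htneg | htpos
    · exact ⟨t, htneg, rfl⟩
    · exfalso
      -- take x = -s • u with s large
      set s : ℝ := (max 0 (-c) + max 0 (-d / t)) / ⟪u, u⟫ with hs
      have hsu : s * ⟪u, u⟫ = max 0 (-c) + max 0 (-d / t) := by
        rw [hs, div_mul_cancel₀ _ (ne_of_gt hg11)]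
      have h1 : ⟪u, (-s) • u⟫ = -(s * ⟪u, u⟫) := by
        rw [real_inner_smul_right]; ring
      have h2 : ⟪t • u, (-s) • u⟫ = -(t * (s * ⟪u, u⟫)) := by
        rw [real_inner_smul_right, real_inner_smul_left]; ring
      rcases hcov ((-s) • u) with hx | hx
      · rw [h1, hsu] at hx
        have := le_max_right (0:ℝ) (-c)
        have := le_max_left (0:ℝ) (-d / t)
        linarith
      · rw [h2, hsu] at hx
        have h3 : -d / t ≤ max 0 (-d / t) := le_max_right _ _
        have h4 : (0:ℝ) ≤ max 0 (-c) := le_max_left _ _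
        have h5 : t * (-d / t) ≤ t * (max 0 (-c) + max 0 (-d / t)) := by
          apply mul_le_mul_of_nonneg_left _ htpos.le
          linarith
        rw [mul_div_cancel₀ _ ht0] at h5
        linarith
  · exfalso
    -- u, v linearly independent: strict Cauchy-Schwarz
    have hcs : |⟪u, v⟫| < ‖u‖ * ‖v‖ := by
      have hle : |⟪u, v⟫ / (‖u‖ * ‖v‖)| ≤ 1 := abs_real_inner_div_norm_mul_norm_le_one u v
      have hne : |⟪u, v⟫ / (‖u‖ * ‖v‖)| ≠ 1 := by
        intro h1
        obtain ⟨-, r, hr, hrv⟩ := (abs_real_inner_div_norm_mul_norm_eq_one_iff u v).mp h1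
        exact hdep ⟨r, hrv⟩
      have hlt : |⟪u, v⟫ / (‖u‖ * ‖v‖)| < 1 := lt_of_le_of_ne hle hne
      have hpos : (0:ℝ) < ‖u‖ * ‖v‖ :=
        mul_pos (norm_pos_iff.mpr hu) (norm_pos_iff.mpr hv)
      rw [abs_div, abs_of_pos hpos, div_lt_one hpos] at hlt
      exact hlt
    have hg11n : ⟪u, u⟫ = ‖u‖ ^ 2 := real_inner_self_eq_norm_sq u
    have hg22n : ⟪v, v⟫ = ‖v‖ ^ 2 := real_inner_self_eq_norm_sq v
    have hdet : 0 < ⟪u, u⟫ * ⟪v, v⟫ - ⟪u, v⟫ ^ 2 := by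
      rw [hg11n, hg22n]
      nlinarith [abs_nonneg (⟪u, v⟫), sq_abs (⟪u, v⟫), norm_nonneg u, norm_nonneg v]
    have hdetne : ⟪u, u⟫ * ⟪v, v⟫ - ⟪u, v⟫ ^ 2 ≠ 0 := ne_of_gt hdet
    set x : EuclideanSpace ℝ (Fin 2) :=
      ((c * ⟪v, v⟫ - d * ⟪u, v⟫) / (⟪u, u⟫ * ⟪v, v⟫ - ⟪u, v⟫ ^ 2)) • u +
        ((d * ⟪u, u⟫ - c * ⟪u, v⟫) / (⟪u, u⟫ * ⟪v, v⟫ - ⟪u, v⟫ ^ 2)) • v with hx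
    have hux : ⟪u, x⟫ = c := by
      rw [hx, inner_add_right, real_inner_smul_right, real_inner_smul_right]
      exact gram_solve1 _ _ _ _ _ hdetne
    have hvx : ⟪v, x⟫ = d := by
      rw [hx, inner_add_right, real_inner_smul_right, real_inner_smul_right,
        ← real_inner_comm v u]
      exact gram_solve2 _ _ _ _ _ hdetne
    rcases hcov x with h' | h' <;> [rw [hux] at h'; rw [hvx] at h'] <;> exact lt_irrefl _ h'

/-- If a finite family of open half-planes covers `ℝ²`, then at most three of
them already cover `ℝ²`; moreover, whenever two open half-planes cover `ℝ²`,
they are parallel opposite half-planes (their normals are negative multiples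
of each other). -/
theorem halfplanes_cover_plane
    (S : Finset ((EuclideanSpace ℝ (Fin 2)) × ℝ)) (hS : ∀ p ∈ S, p.1 ≠ 0)
    (hcover : (⋃ p ∈ S, openHalfPlane p.1 p.2) = Set.univ) :
    (∃ R ⊆ S, R.card ≤ 3 ∧ (⋃ p ∈ R, openHalfPlane p.1 p.2) = Set.univ) ∧
    (∀ u v : EuclideanSpace ℝ (Fin 2), ∀ c d : ℝ, u ≠ 0 → v ≠ 0 →
      openHalfPlane u c ∪ openHalfPlane v d = Set.univ →
      ∃ t : ℝ, t < 0 ∧ v = t • u) := by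
  classical
  constructor
  · by_contra hcon
    push_neg at hcon
    have hrank : Module.finrank ℝ (EuclideanSpace ℝ (Fin 2)) = 2 := by
      simp [finrank_euclideanSpace]
    have hconv : ∀ p ∈ S, Convex ℝ ((openHalfPlane p.1 p.2)ᶜ) := by
      intro p _
      have : (openHalfPlane p.1 p.2)ᶜ = {x | ⟪p.1, x⟫ ≤ p.2} := by
        ext x; simp [openHalfPlane, not_lt]
      rw [this]
      exact convex_halfSpace_le ⟨fun a b => inner_add_right _ _ _,
        fun r a => real_inner_smul_right _ _ _⟩ p.2
    have hinter : ∀ I ⊆ S, I.card ≤ Module.finrank ℝ (EuclideanSpace ℝ (Fin 2)) + 1 →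
        (⋂ p ∈ I, (openHalfPlane p.1 p.2)ᶜ).Nonempty := by
      intro I hIS hIcard
      rw [hrank] at hIcard
      have hne := hcon I hIS hIcard
      obtain ⟨x, hx⟩ := Set.ne_univ_iff_exists_notMem _ |>.mp hne
      refine ⟨x, ?_⟩
      simp only [Set.mem_iInter, Set.mem_compl_iff]
      intro p hp hxp
      exact hx (Set.mem_biUnion hp hxp)
    obtain ⟨x, hx⟩ := Convex.helly_theorem' (𝕜 := ℝ) hconv hinter
    have : x ∈ ⋃ p ∈ S, openHalfPlane p.1 p.2 := by rw [hcover]; trivial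
    obtain ⟨p, hp, hxp⟩ := Set.mem_iUnion₂.mp this
    simp only [Set.mem_iInter, Set.mem_compl_iff] at hx
    exact hx p hp hxp
  · exact fun u v c d hu hv h => two_halfplanes u v c d hu hv h
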